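/- arXiv:2106.15812 — 4 statements merged into one kernel-verified Lean document; each statement's English description precedes it below -/
import Mathlib

section
/- Let p be a random variable on [0,1] with a non-decreasing probability density function f, and let 0 < α_m ≤ λ < ν ≤ 1 with ζ = (ν - λ)/α_m. Then ζ·P(p ∈ [0, α_m]) ≤ P(p ∈ [λ, ν]). -/
open Set MeasureTheory

theorem blue_region_at_least_zeta_times_red
    (f : ℝ → ℝ) (hf0 : ∀ x, 0 ≤ f x) (hmono : MonotoneOn f (Icc (0:ℝ) 1))
    (hint : IntegrableOn f (Icc (0:ℝ) 1))
    (hdens : ∫ x in Icc (0:ℝ) 1, f x = 1)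
    (αm lam ν : ℝ) (h1 : 0 < αm) (h2 : αm ≤ lam) (h3 : lam < ν) (h4 : ν ≤ 1)
    (ζ : ℝ) (hζ : ζ = (ν - lam) / αm) :
    ζ * ∫ x in Icc (0:ℝ) αm, f x ≤ ∫ x in Icc lam ν, f x := by
  have hαm1 : αm ≤ 1 := le_trans h2 (le_trans h3.le h4)
  have hαmem : αm ∈ Icc (0:ℝ) 1 := ⟨h1.le, hαm1⟩
  have hsub1 : Icc (0:ℝ) αm ⊆ Icc (0:ℝ) 1 := Icc_subset_Icc le_rfl hαm1
  have hsub2 : Icc lam ν ⊆ Icc (0:ℝ) 1 :=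
    Icc_subset_Icc (le_trans h1.le h2) h4
  have hint1 : IntegrableOn f (Icc (0:ℝ) αm) := hint.mono_set hsub1
  have hint2 : IntegrableOn f (Icc lam ν) := hint.mono_set hsub2
  have hupper : ∫ x in Icc (0:ℝ) αm, f x ≤ αm * f αm := by
    have := setIntegral_mono_on hint1 ((integrableOn_const_iff (C := f αm)).mpr (Or.inr (by
      simp [Real.volume_Icc]))) measurableSet_Icc
      (fun x hx => hmono (hsub1 hx) hαmem hx.2)
    calc ∫ x in Icc (0:ℝ) αm, f x ≤ ∫ _x in Icc (0:ℝ) αm, f αm := this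
      _ = αm * f αm := by
          simp [Real.volume_Icc, h1.le, smul_eq_mul]
  have hlower : (ν - lam) * f αm ≤ ∫ x in Icc lam ν, f x := by
    have : ∫ _x in Icc lam ν, f αm ≤ ∫ x in Icc lam ν, f x := by
      refine setIntegral_mono_on ((integrableOn_const_iff (C := f αm)).mpr (Or.inr (by
        simp [Real.volume_Icc]))) hint2 measurableSet_Icc
        (fun x hx => hmono hαmem (hsub2 hx) (le_trans h2 hx.1))
    calc (ν - lam) * f αm = ∫ _x in Icc lam ν, f αm := by
          simp [Real.volume_Icc, h3.le, smul_eq_mul]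
      _ ≤ _ := this
  have hζ0 : 0 ≤ ζ := by
    rw [hζ]; exact div_nonneg (by linarith) h1.le
  calc ζ * ∫ x in Icc (0:ℝ) αm, f x ≤ ζ * (αm * f αm) := by
        exact mul_le_mul_of_nonneg_left hupper hζ0
    _ = (ν - lam) * f αm := by
        rw [hζ]; field_simp
    _ ≤ ∫ x in Icc lam ν, f x := hlower
end

section
/- Let p be a random variable on [0,1] with non-decreasing density, let 0 < α_m ≤ λ < ν ≤ 1 and ζ = (ν - λ)/α_m, and suppose P(p ∈ [0, α_m] ∪ [λ, ν]) > 0. Then the conditional probability P(p ∈ [λ, ν] | p ∈ [0, α_m] ∪ [λ, ν]) ≥ ζ/(1 + ζ). -/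
open Set MeasureTheory

theorem masked_null_blue_conditional_prob
    (f : ℝ → ℝ) (hf0 : ∀ x, 0 ≤ f x) (hmono : MonotoneOn f (Icc (0:ℝ) 1))
    (hint : IntegrableOn f (Icc (0:ℝ) 1))
    (hdens : ∫ x in Icc (0:ℝ) 1, f x = 1)
    (αm lam ν : ℝ) (h1 : 0 < αm) (h2 : αm ≤ lam) (h3 : lam < ν) (h4 : ν ≤ 1)
    (ζ : ℝ) (hζ : ζ = (ν - lam) / αm)
    (hpos : 0 < ∫ x in Icc (0:ℝ) αm ∪ Icc lam ν, f x) :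
    ζ / (1 + ζ) ≤
      (∫ x in Icc lam ν, f x) / ∫ x in Icc (0:ℝ) αm ∪ Icc lam ν, f x := by
  set A := ∫ x in Icc (0:ℝ) αm, f x with hA
  set B := ∫ x in Icc lam ν, f x with hB
  have hαm1 : αm ≤ 1 := h2.trans (h3.le.trans h4)
  have hsub1 : Icc (0:ℝ) αm ⊆ Icc 0 1 := Icc_subset_Icc le_rfl hαm1
  have hlam0 : (0:ℝ) ≤ lam := h1.le.trans h2
  have hsub2 : Icc lam ν ⊆ Icc (0:ℝ) 1 := Icc_subset_Icc hlam0 h4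
  have hi1 : IntegrableOn f (Icc (0:ℝ) αm) := hint.mono_set hsub1
  have hi2 : IntegrableOn f (Icc lam ν) := hint.mono_set hsub2
  have hlamIcc : lam ∈ Icc (0:ℝ) 1 := ⟨hlam0, h3.le.trans h4⟩
  -- union integral splits
  have hdisj : AEDisjoint volume (Icc (0:ℝ) αm) (Icc lam ν) := by
    refine measure_mono_null (fun x hx => ?_) (measure_singleton lam)
    obtain ⟨⟨_, hxa⟩, ⟨hxl, _⟩⟩ := hx
    have : x = lam := le_antisymm (hxa.trans h2) hxl
    simpa using this
  have hunion : (∫ x in Icc (0:ℝ) αm ∪ Icc lam ν, f x) = A + B := by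
    rw [integral_union_ae hdisj measurableSet_Icc.nullMeasurableSet hi1 hi2]
  rw [hunion] at hpos ⊢
  -- bounds
  have hfl : 0 ≤ f lam := hf0 lam
  have hA_le : A ≤ αm * f lam := by
    have : A ≤ ∫ _x in Icc (0:ℝ) αm, f lam := by
      refine setIntegral_mono_on hi1 (integrableOn_const (by simp) (by simp)) measurableSet_Icc
        (fun x hx => hmono (hsub1 hx) hlamIcc (hx.2.trans h2))
    simpa [Real.volume_Icc, h1.le, mul_comm] using this
  have hB_ge : (ν - lam) * f lam ≤ B := by
    have : (∫ _x in Icc lam ν, f lam) ≤ B := by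
      refine setIntegral_mono_on (integrableOn_const (by simp) (by simp)) hi2 measurableSet_Icc
        (fun x hx => hmono hlamIcc (hsub2 hx) hx.1)
    simpa [Real.volume_Icc, h3.le, mul_comm] using this
  have hζ0 : 0 ≤ ζ := by
    rw [hζ]; exact div_nonneg (by linarith) h1.le
  have h1ζ : 0 < 1 + ζ := by linarith
  rw [div_le_div_iff₀ h1ζ hpos]
  have hζA : ζ * A ≤ B := by
    have : ζ * A ≤ ζ * (αm * f lam) := by
      have hA0 : 0 ≤ A := setIntegral_nonneg measurableSet_Icc (fun x _ => hf0 x)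
      nlinarith
    calc ζ * A ≤ ζ * (αm * f lam) := this
      _ = (ν - lam) * f lam := by rw [hζ]; field_simp
      _ ≤ B := hB_ge
  nlinarith
end

section
/- Let Z ~ N(θ, σ²) with σ > 0 and θ ≤ 0, and let p = 1 - Φ(Z/σ) be the one-sided p-value, where Φ is the standard normal CDF. Then p has a non-decreasing density on (0,1). Explicitly, the density of p at u ∈ (0,1) is φ(Φ⁻¹(1-u) - θ/σ)/φ(Φ⁻¹(1-u)), which is non-decreasing in u when θ ≤ 0. -/
open Set MeasureTheory ProbabilityTheory intervalIntegral

lemma stdpdf_cont : Continuous (gaussianPDFReal 0 1) := by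
  rw [gaussianPDFReal_def]
  exact continuous_const.mul (((continuous_id.sub continuous_const).pow 2).neg.div_const _).rexp

lemma stdpdf_intInt (a b : ℝ) : IntervalIntegrable (gaussianPDFReal 0 1) volume a b :=
  (integrable_gaussianPDFReal 0 1).intervalIntegrable

lemma stdCDF_eq (z : ℝ) : cdf (gaussianReal 0 1) z
    = (∫ t in Set.Iic (0:ℝ), gaussianPDFReal 0 1 t) + ∫ t in (0:ℝ)..z, gaussianPDFReal 0 1 t := by
  have h := integral_Iic_sub_Iic ((integrable_gaussianPDFReal 0 1).integrableOn (s := Iic 0))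
    ((integrable_gaussianPDFReal 0 1).integrableOn (s := Iic z))
  rw [cdf_eq_real, measureReal_def, gaussianReal_apply_eq_integral 0 one_ne_zero,
    ENNReal.toReal_ofReal (integral_nonneg fun t => gaussianPDFReal_nonneg 0 1 t)]
  linarith

lemma stdCDF_hasDerivAt (x : ℝ) :
    HasDerivAt (fun z => cdf (gaussianReal 0 1) z) (gaussianPDFReal 0 1 x) x := by
  have : HasDerivAt (fun z => (∫ t in Set.Iic (0:ℝ), gaussianPDFReal 0 1 t)
      + ∫ t in (0:ℝ)..z, gaussianPDFReal 0 1 t) (gaussianPDFReal 0 1 x) x := by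
    refine HasDerivAt.const_add _ ?_
    exact integral_hasDerivAt_right (stdpdf_intInt 0 x)
      (stdpdf_cont.stronglyMeasurable.stronglyMeasurableAtFilter)
      stdpdf_cont.continuousAt
  exact this.congr_of_eventuallyEq (Filter.Eventually.of_forall fun z => (stdCDF_eq z))

lemma stdCDF_strictMono : StrictMono (fun z => cdf (gaussianReal 0 1) z) := by
  intro x y hxy
  have h1 := stdCDF_eq x
  have h2 := stdCDF_eq y
  have h3 : (∫ t in (0:ℝ)..y, gaussianPDFReal 0 1 t) - ∫ t in (0:ℝ)..x, gaussianPDFReal 0 1 t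
      = ∫ t in x..y, gaussianPDFReal 0 1 t := by
    rw [sub_eq_iff_eq_add']
    exact (integral_add_adjacent_intervals (stdpdf_intInt 0 x) (stdpdf_intInt x y)).symm
  have h4 : 0 < ∫ t in x..y, gaussianPDFReal 0 1 t :=
    intervalIntegral_pos_of_pos (stdpdf_intInt x y)
      (fun t => gaussianPDFReal_pos 0 1 t one_ne_zero) hxy
  simp only
  linarith

lemma stdCDF_mem_Ioo (x : ℝ) : cdf (gaussianReal 0 1) x ∈ Ioo (0:ℝ) 1 := by
  constructor
  · exact lt_of_le_of_lt (cdf_nonneg (gaussianReal 0 1) (x - 1))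
      (stdCDF_strictMono (by linarith : x - 1 < x))
  · exact lt_of_lt_of_le (stdCDF_strictMono (by linarith : x < x + 1))
      (cdf_le_one (gaussianReal 0 1) (x + 1))

theorem one_sided_pvalue_density_nondecreasing
    (θ σ : ℝ) (hσ : 0 < σ) (hθ : θ ≤ 0)
    (Φ : ℝ → ℝ) (hΦ : Φ = fun z => cdf (gaussianReal 0 1) z)
    (Φinv : ℝ → ℝ) (hΦinv : ∀ u ∈ Ioo (0:ℝ) 1, Φ (Φinv u) = u)
    (h : ℝ → ℝ)
    (hh : ∀ u ∈ Ioo (0:ℝ) 1,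
      h u = gaussianPDFReal 0 1 (Φinv (1 - u) - θ / σ) / gaussianPDFReal 0 1 (Φinv (1 - u))) :
    MonotoneOn h (Ioo (0:ℝ) 1) ∧
    Measure.map (fun z => 1 - Φ (z / σ)) (gaussianReal θ ((σ ^ 2).toNNReal)) =
      volume.withDensity (fun u => ENNReal.ofReal (Set.indicator (Ioo (0:ℝ) 1) h u)) := by
  set c : ℝ := θ / σ with hcdef
  have hc : c ≤ 0 := div_nonpos_iff.mpr (Or.inr ⟨hθ, hσ.le⟩)
  have hΦd : ∀ x, HasDerivAt Φ (gaussianPDFReal 0 1 x) x := by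
    rw [hΦ]; exact stdCDF_hasDerivAt
  have hΦsm : StrictMono Φ := by rw [hΦ]; exact stdCDF_strictMono
  have hΦmem : ∀ x, Φ x ∈ Ioo (0:ℝ) 1 := by rw [hΦ]; exact stdCDF_mem_Ioo
  have hΦinj : Function.Injective Φ := hΦsm.injective
  have hΦinvΦ : ∀ x, Φinv (Φ x) = x := fun x => hΦinj (hΦinv (Φ x) (hΦmem x))
  -- explicit exponential form of h
  have hexp : ∀ u ∈ Ioo (0:ℝ) 1,
      h u = Real.exp (c * Φinv (1 - u) - c ^ 2 / 2) := by
    intro u hu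
    rw [hh u hu]
    simp only [gaussianPDFReal, NNReal.coe_one, mul_one, sub_zero]
    rw [mul_div_mul_left _ _ (by positivity : ((Real.sqrt (2 * Real.pi))⁻¹ : ℝ) ≠ 0),
      ← Real.exp_sub]
    congr 1
    ring
  constructor
  · -- monotone part
    intro u hu v hv huv
    have hu' : (1:ℝ) - u ∈ Ioo (0:ℝ) 1 := ⟨by linarith [hu.2], by linarith [hu.1]⟩
    have hv' : (1:ℝ) - v ∈ Ioo (0:ℝ) 1 := ⟨by linarith [hv.2], by linarith [hv.1]⟩
    rw [hexp u hu, hexp v hv]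
    apply Real.exp_le_exp.mpr
    have hx : Φinv (1 - v) ≤ Φinv (1 - u) := by
      rw [← hΦsm.le_iff_le, hΦinv _ hv', hΦinv _ hu']
      linarith
    have := mul_le_mul_of_nonpos_left hx hc
    linarith
  · -- measure part
    have hΦcont : Continuous Φ :=
      continuous_iff_continuousAt.mpr fun x => (hΦd x).continuousAt
    have hGm : Measurable (fun w => 1 - Φ w) := (measurable_const.sub hΦcont.measurable)
    have hGanti : StrictAnti (fun w => 1 - Φ w) := fun a b hab => by
      simpa using sub_lt_sub_left (hΦsm hab) 1
    have hcomp : (fun z : ℝ => 1 - Φ (z / σ))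
        = (fun w => 1 - Φ w) ∘ (fun z => σ⁻¹ * z) := by
      funext z; simp [Function.comp, div_eq_inv_mul]
    have hmapmul : Measure.map (fun z => σ⁻¹ * z) (gaussianReal θ ((σ ^ 2).toNNReal))
        = gaussianReal c 1 := by
      have hmc := gaussianReal_map_const_mul (μ := θ) (v := (σ ^ 2).toNNReal) σ⁻¹
      rw [hmc]
      congr 1
      · rw [hcdef, inv_mul_eq_div]
      · apply NNReal.coe_injective
        push_cast
        rw [Real.coe_toNNReal _ (sq_nonneg σ)]
        field_simp
    rw [hcomp, ← Measure.map_map hGm (measurable_const_mul σ⁻¹), hmapmul]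
    haveI : IsProbabilityMeasure (Measure.map (fun w => 1 - Φ w) (gaussianReal c 1)) :=
      Measure.isProbabilityMeasure_map hGm.aemeasurable
    -- change of variables core
    have key : ∀ s : Set ℝ, MeasurableSet s →
        ∫⁻ u in (fun w => 1 - Φ w) '' s, ENNReal.ofReal (h u)
          = ∫⁻ x in s, gaussianPDF c 1 x := by
      intro s hs
      rw [lintegral_image_eq_lintegral_abs_det_fderiv_mul volume hs
        (f' := fun x => (1 : ℝ →L[ℝ] ℝ).smulRight (-(gaussianPDFReal 0 1 x)))
        (fun x _ => (((hΦd x).const_sub 1).hasFDerivAt).hasFDerivWithinAt)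
        hGanti.injective.injOn _]
      refine setLIntegral_congr_fun hs (fun x hx => ?_)
      have hmem := hΦmem x
      have h1 : (1:ℝ) - (1 - Φ x) ∈ Ioo (0:ℝ) 1 := by
        simpa using hmem
      have hGx : (1:ℝ) - Φ x ∈ Ioo (0:ℝ) 1 := ⟨by linarith [hmem.2], by linarith [hmem.1]⟩
      have hne : gaussianPDFReal 0 1 x ≠ 0 := (gaussianPDFReal_pos 0 1 x one_ne_zero).ne'
      rw [ContinuousLinearMap.smulRight_one_eq_toSpanSingleton, ContinuousLinearMap.det_toSpanSingleton, hh _ hGx]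
      have h2 : (1:ℝ) - (1 - Φ x) = Φ x := by ring
      rw [h2, hΦinvΦ x, abs_neg, abs_of_nonneg (gaussianPDFReal_nonneg 0 1 x),
        ← ENNReal.ofReal_mul (gaussianPDFReal_nonneg 0 1 x), mul_comm,
        div_mul_cancel₀ _ hne]
      rw [gaussianPDF, gaussianPDFReal_sub, zero_add]
    refine Measure.ext_of_Iic _ _ (fun t => ?_)
    rw [Measure.map_apply hGm measurableSet_Iic, withDensity_apply _ measurableSet_Iic]
    have hind : (fun u => ENNReal.ofReal ((Ioo (0:ℝ) 1).indicator h u))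
        = (Ioo (0:ℝ) 1).indicator (fun u => ENNReal.ofReal (h u)) := by
      ext u; by_cases hu : u ∈ Ioo (0:ℝ) 1 <;> simp [hu]
    rw [hind, lintegral_indicator measurableSet_Ioo,
      Measure.restrict_restrict measurableSet_Ioo]
    rcases le_or_gt t 0 with ht0 | ht0
    · have hpre : (fun w => 1 - Φ w) ⁻¹' Iic t = ∅ := by
        ext w
        simp only [mem_preimage, mem_Iic, mem_empty_iff_false, iff_false, not_le]
        have := (hΦmem w).2; linarith
      have hint : Ioo (0:ℝ) 1 ∩ Iic t = ∅ := by
        ext u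
        simp only [mem_inter_iff, mem_Ioo, mem_Iic, mem_empty_iff_false, iff_false, not_and]
        rintro ⟨h1, _⟩ h3; linarith
      rw [hpre, hint]
      simp
    rcases lt_or_ge t 1 with ht1 | ht1
    · have htmem : (1:ℝ) - t ∈ Ioo (0:ℝ) 1 := ⟨by linarith, by linarith⟩
      set a := Φinv (1 - t) with ha
      have hΦa : Φ a = 1 - t := hΦinv _ htmem
      have hpre : (fun w => 1 - Φ w) ⁻¹' Iic t = Ici a := by
        ext w
        simp only [mem_preimage, mem_Iic, mem_Ici]
        constructor
        · intro hw
          exact (hΦsm.le_iff_le).mp (by rw [hΦa]; linarith)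
        · intro hw
          have := hΦsm.le_iff_le.mpr hw
          rw [hΦa] at this; linarith
      have himg : (fun w => 1 - Φ w) '' Ici a = Ioc 0 t := by
        apply Subset.antisymm
        · rintro u ⟨x, hx, rfl⟩
          constructor
          · have := (hΦmem x).2; simp only; linarith
          · have := hΦsm.le_iff_le.mpr hx
            rw [hΦa] at this; simp only; linarith
        · rintro u ⟨hu0, hut⟩
          have hu1 : u < 1 := lt_of_le_of_lt hut ht1
          have humem : (1:ℝ) - u ∈ Ioo (0:ℝ) 1 := ⟨by linarith, by linarith⟩
          refine ⟨Φinv (1 - u), ?_, ?_⟩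
          · rw [mem_Ici, ← hΦsm.le_iff_le, hΦa, hΦinv _ humem]; linarith
          · show (1:ℝ) - Φ (Φinv (1 - u)) = u
            rw [hΦinv _ humem]; ring
      have hint : Ioo (0:ℝ) 1 ∩ Iic t = Ioc 0 t := by
        ext u
        simp only [mem_inter_iff, mem_Ioo, mem_Iic, mem_Ioc]
        constructor
        · rintro ⟨⟨h1, _⟩, h3⟩; exact ⟨h1, h3⟩
        · rintro ⟨h1, h2⟩; exact ⟨⟨h1, lt_of_le_of_lt h2 ht1⟩, h2⟩
      rw [hpre, hint, ← himg, key _ measurableSet_Ici, gaussianReal_apply c one_ne_zero]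
    · have hpre : (fun w => 1 - Φ w) ⁻¹' Iic t = univ := by
        ext w
        simp only [mem_preimage, mem_Iic, mem_univ, iff_true]
        have := (hΦmem w).1; linarith
      have himg : (fun w => 1 - Φ w) '' univ = Ioo 0 1 := by
        apply Subset.antisymm
        · rintro u ⟨x, _, rfl⟩
          have := hΦmem x
          exact ⟨by simp only; linarith [this.2], by simp only; linarith [this.1]⟩
        · rintro u ⟨hu0, hu1⟩
          have humem : (1:ℝ) - u ∈ Ioo (0:ℝ) 1 := ⟨by linarith, by linarith⟩
          exact ⟨Φinv (1 - u), mem_univ _, by show (1:ℝ) - Φ (Φinv (1 - u)) = u; rw [hΦinv _ humem]; ring⟩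
      have hint : Ioo (0:ℝ) 1 ∩ Iic t = Ioo 0 1 :=
        inter_eq_left.mpr (fun u hu => le_trans hu.2.le ht1)
      rw [hpre, hint, ← himg, key _ MeasurableSet.univ, Measure.restrict_univ,
        lintegral_gaussianPDF_eq_one c one_ne_zero, measure_univ]
end

section
/- Let Z ~ N(θ, σ²) with θ = 0 and σ > 0, let p = 2(1 - Φ(|Z|/σ)) be the two-sided p-value, b = 1{p ∈ [λ,ν]} for masking parameters 0 < α_m ≤ λ < ν ≤ 1, and s = sgn(Z)·(-1)^b. Then conditional on the event p ∈ [0,α_m] ∪ [λ,ν] and on the masked value m = g(p), the sign variable s is independent of b, and s is uniform on {-1, +1}. -/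
open Set MeasureTheory ProbabilityTheory
open scoped Classical ENNReal

/-- The tent masking function. -/
noncomputable def maskFun (lam ν ζ : ℝ) (p : ℝ) : ℝ :=
  if p ∈ Icc lam ν then (ν - p) / ζ else p

lemma symm_half_aux (μ : Measure ℝ) (hmap : μ.map (fun z : ℝ => -z) = μ)
    (h0 : μ ({0} : Set ℝ) = 0)
    (f : ℝ → ℝ) (hodd : ∀ z, f (-z) = - f z)
    (hpm : ∀ z : ℝ, z ≠ 0 → f z = 1 ∨ f z = -1)
    (hfm : Measurable f)
    (S : Set ℝ) (hS : MeasurableSet S) (hsym : ∀ z : ℝ, -z ∈ S ↔ z ∈ S)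
    (s0 : ℝ) (hs0 : s0 = 1 ∨ s0 = -1) :
    μ S = 2 * μ (S ∩ {z | f z = s0}) := by
  have hf0 : f 0 = 0 := by
    have := hodd 0
    simp at this
    linarith
  set P : Set ℝ := S ∩ {z | f z = 1} with hP
  set N : Set ℝ := S ∩ {z | f z = -1} with hN
  have hPm : MeasurableSet P := hS.inter (hfm (measurableSet_singleton 1))
  have hNm : MeasurableSet N := hS.inter (hfm (measurableSet_singleton (-1)))
  have hpre : (fun z : ℝ => -z) ⁻¹' N = P := by
    ext z
    simp only [mem_preimage, hN, hP, mem_inter_iff, mem_setOf_eq, hodd, hsym]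
    constructor
    · rintro ⟨h1, h2⟩; exact ⟨h1, by linarith⟩
    · rintro ⟨h1, h2⟩; exact ⟨h1, by linarith⟩
  have hPN : μ P = μ N := by
    conv_rhs => rw [← hmap]
    rw [Measure.map_apply measurable_neg hNm, hpre]
  have hunion : S \ {0} = P ∪ N := by
    ext z
    simp only [mem_diff, mem_singleton_iff, mem_union, hP, hN, mem_inter_iff, mem_setOf_eq]
    constructor
    · rintro ⟨hzS, hz0⟩
      rcases hpm z hz0 with h | h
      · exact Or.inl ⟨hzS, h⟩
      · exact Or.inr ⟨hzS, h⟩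
    · rintro (⟨hzS, h⟩ | ⟨hzS, h⟩) <;>
      · refine ⟨hzS, fun hz => ?_⟩
        rw [hz, hf0] at h; norm_num at h
  have hdisj : Disjoint P N := by
    rw [Set.disjoint_left]
    rintro z ⟨-, h1⟩ ⟨-, h2⟩
    simp only [mem_setOf_eq] at h1 h2
    rw [h1] at h2; norm_num at h2
  have hmeas : μ S = μ P + μ N := by
    rw [← measure_diff_null h0, hunion, measure_union hdisj hNm]
  rcases hs0 with rfl | rfl
  · rw [hmeas, ← hP, hPN, ← hPN, two_mul]
  · rw [hmeas, ← hN, hPN, two_mul]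

theorem sign_independent_of_masked_info_under_point_null
    (σ : ℝ) (hσ : 0 < σ)
    (αm lam ν : ℝ) (h1 : 0 < αm) (h2 : αm ≤ lam) (h3 : lam < ν) (h4 : ν ≤ 1)
    (ζ : ℝ) (hζ : ζ = (ν - lam) / αm)
    (Φ : ℝ → ℝ) (hΦ : Φ = fun z => cdf (gaussianReal 0 1) z)
    (μ : Measure ℝ) (hμ : μ = gaussianReal 0 ((σ ^ 2).toNNReal))
    (pval : ℝ → ℝ) (hp : ∀ z, pval z = 2 * (1 - Φ (|z| / σ)))
    (bval : ℝ → ℝ) (hb : ∀ z, bval z = if pval z ∈ Icc lam ν then 1 else 0)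
    (sval : ℝ → ℝ)
    (hs : ∀ z, sval z = Real.sign z * (if pval z ∈ Icc lam ν then -1 else 1))
    (E : Set ℝ) (hE : E = {z | pval z ∈ Icc (0:ℝ) αm ∪ Icc lam ν}) :
    (∀ s0 ∈ ({1, -1} : Set ℝ), μ[|E] {z | sval z = s0} = ENNReal.ofReal (1 / 2)) ∧
    (∀ A : Set (ℝ × ℝ), MeasurableSet A → ∀ s0 ∈ ({1, -1} : Set ℝ),
      μ[|E] ({z | sval z = s0} ∩ {z | (bval z, maskFun lam ν ζ (pval z)) ∈ A})
        = μ[|E] {z | sval z = s0} *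
            μ[|E] {z | (bval z, maskFun lam ν ζ (pval z)) ∈ A}) := by
  set v : NNReal := (σ ^ 2).toNNReal with hv
  have hvne : v ≠ 0 := by
    simp only [hv, ne_eq, Real.toNNReal_eq_zero, not_le]
    positivity
  -- symmetry of μ under negation
  have hmap : μ.map (fun z : ℝ => -z) = μ := by
    have h := gaussianReal_map_const_mul (μ := 0) (v := v) (-1)
    have heq : (fun x : ℝ => (-1 : ℝ) * x) = (fun z : ℝ => -z) := by
      funext x; ring
    rw [heq] at h
    rw [hμ, h]
    congr 1
    · ring
    · ext; simp
  -- no atom at 0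
  have h0 : μ ({0} : Set ℝ) = 0 := by
    rw [hμ]
    exact gaussianReal_absolutelyContinuous 0 hvne (measure_singleton 0)
  -- measurability
  have hΦm : Measurable Φ := by
    rw [hΦ]; exact (monotone_cdf _).measurable
  have hpvm : Measurable pval := by
    have : pval = fun z => 2 * (1 - Φ (|z| / σ)) := funext hp
    rw [this]
    exact measurable_const.mul (measurable_const.sub
      (hΦm.comp (measurable_abs.div_const σ)))
  have hIccm : MeasurableSet {z : ℝ | pval z ∈ Icc lam ν} := hpvm measurableSet_Icc
  have hsignm : Measurable Real.sign := by
    have : Real.sign = fun r : ℝ => if r < 0 then (-1:ℝ) else if 0 < r then 1 else 0 := rfl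
    rw [this]
    exact Measurable.ite (measurableSet_lt measurable_id measurable_const)
      measurable_const (Measurable.ite
        (measurableSet_lt measurable_const measurable_id) measurable_const measurable_const)
  have hsm : Measurable sval := by
    have : sval = fun z => Real.sign z * (if pval z ∈ Icc lam ν then -1 else 1) :=
      funext hs
    rw [this]
    exact hsignm.mul (Measurable.ite hIccm measurable_const measurable_const)
  have hbm : Measurable bval := by
    have : bval = fun z => if pval z ∈ Icc lam ν then (1:ℝ) else 0 := funext hb
    rw [this]
    exact Measurable.ite hIccm measurable_const measurable_const
  have hmaskm : Measurable (fun z => maskFun lam ν ζ (pval z)) := by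
    have : (fun z => maskFun lam ν ζ (pval z))
        = fun z => if pval z ∈ Icc lam ν then (ν - pval z) / ζ else pval z := by
      funext z; rfl
    rw [this]
    exact Measurable.ite hIccm ((measurable_const.sub hpvm).div_const ζ) hpvm
  have hEm : MeasurableSet E := by
    rw [hE]
    exact hpvm (measurableSet_Icc.union measurableSet_Icc)
  -- symmetry of the various functions
  have hpsym : ∀ z, pval (-z) = pval z := by
    intro z; rw [hp, hp, abs_neg]
  have hEsym : ∀ z : ℝ, -z ∈ E ↔ z ∈ E := by
    intro z; rw [hE]; simp only [mem_setOf_eq, hpsym]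
  have hsodd : ∀ z, sval (-z) = - sval z := by
    intro z
    rw [hs, hs, hpsym, Real.sign_neg]
    ring
  have hspm : ∀ z : ℝ, z ≠ 0 → sval z = 1 ∨ sval z = -1 := by
    intro z hz
    rw [hs]
    rcases Real.sign_apply_eq_of_ne_zero z hz with h | h <;> rw [h] <;>
      split_ifs <;> norm_num
  -- μ E is positive and finite
  have hprob : IsProbabilityMeasure μ := by rw [hμ]; infer_instance
  have hEt : μ E ≠ ⊤ := measure_ne_top μ E
  have hE0 : μ E ≠ 0 := by
    have hlt : 1 - αm / 2 < 1 := by linarith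
    have hev : ∀ᶠ x in Filter.atTop, 1 - αm / 2 ≤ cdf (gaussianReal 0 1) x :=
      (tendsto_cdf_atTop (gaussianReal 0 1)).eventually (eventually_ge_nhds hlt)
    obtain ⟨c, hc⟩ := Filter.eventually_atTop.mp hev
    set c' : ℝ := max c 0 with hc'
    have hsub : Ici (σ * c') ⊆ E := by
      intro z hz
      rw [mem_Ici] at hz
      have hz0 : 0 ≤ z := le_trans (by positivity) hz
      have habs : |z| = z := abs_of_nonneg hz0
      have hzc : c ≤ |z| / σ := by
        rw [habs, le_div_iff₀ hσ]
        calc c * σ ≤ c' * σ := by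
              apply mul_le_mul_of_nonneg_right (le_max_left _ _) hσ.le
          _ = σ * c' := mul_comm _ _
          _ ≤ z := hz
      have hΦz : 1 - αm / 2 ≤ Φ (|z| / σ) := by rw [hΦ]; exact hc _ hzc
      have hΦ1 : Φ (|z| / σ) ≤ 1 := by rw [hΦ]; exact cdf_le_one _ _
      rw [hE]
      left
      rw [hp]
      exact ⟨by linarith, by linarith⟩
    intro h
    have hIci0 : μ (Ici (σ * c')) = 0 := measure_mono_null hsub h
    rw [hμ, gaussianReal_apply 0 hvne] at hIci0
    rw [lintegral_eq_zero_iff (measurable_gaussianPDF 0 v)] at hIci0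
    have h2 := ae_iff.mp hIci0
    have huniv : {x : ℝ | ¬ gaussianPDF 0 v x = (0 : ℝ → ℝ≥0∞) x} = univ := by
      ext x
      simp only [mem_setOf_eq, mem_univ, iff_true, Pi.zero_apply]
      exact (gaussianPDF_pos 0 hvne x).ne'
    rw [huniv, Measure.restrict_apply_univ, Real.volume_Ici] at h2
    exact ENNReal.top_ne_zero h2
  -- the two key counting identities
  have key : ∀ S : Set ℝ, MeasurableSet S → (∀ z : ℝ, -z ∈ S ↔ z ∈ S) →
      ∀ s0 : ℝ, s0 = 1 ∨ s0 = -1 → μ S = 2 * μ (S ∩ {z | sval z = s0}) :=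
    fun S hS hsym s0 hs0 => symm_half_aux μ hmap h0 sval hsodd hspm hsm S hS hsym s0 hs0
  have h2ne0 : (2 : ℝ≥0∞) ≠ 0 := by norm_num
  have h2net : (2 : ℝ≥0∞) ≠ ⊤ := by norm_num
  have hhalf : ENNReal.ofReal (1 / 2) = (2 : ℝ≥0∞)⁻¹ := by
    rw [one_div, ENNReal.ofReal_inv_of_pos (by norm_num : (0:ℝ) < 2)]
    norm_num
  have part1 : ∀ s0 ∈ ({1, -1} : Set ℝ), μ[|E] {z | sval z = s0} = ENNReal.ofReal (1 / 2) := by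
    intro s0 hs0
    simp only [mem_insert_iff, mem_singleton_iff] at hs0
    have hkey := key E hEm hEsym s0 hs0
    have hm : μ (E ∩ {z | sval z = s0}) = 2⁻¹ * μ E := by
      rw [hkey, ← mul_assoc, ENNReal.inv_mul_cancel h2ne0 h2net, one_mul]
    rw [cond_apply hEm, hm, hhalf, mul_comm ((2:ℝ≥0∞)⁻¹) (μ E), ← mul_assoc,
      ENNReal.inv_mul_cancel hE0 hEt, one_mul]
  refine ⟨part1, ?_⟩
  intro A hA s0 hs0
  simp only [mem_insert_iff, mem_singleton_iff] at hs0
  set B : Set ℝ := {z | (bval z, maskFun lam ν ζ (pval z)) ∈ A} with hB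
  have hBm : MeasurableSet B := (hbm.prodMk hmaskm) hA
  have hBsym : ∀ z : ℝ, -z ∈ B ↔ z ∈ B := by
    intro z
    have hb' : bval (-z) = bval z := by rw [hb, hb, hpsym]
    simp only [hB, mem_setOf_eq, hb', hpsym]
  have hEBm : MeasurableSet (E ∩ B) := hEm.inter hBm
  have hEBsym : ∀ z : ℝ, -z ∈ E ∩ B ↔ z ∈ E ∩ B := by
    intro z; simp only [mem_inter_iff, hEsym, hBsym]
  have hkeyEB := key (E ∩ B) hEBm hEBsym s0 hs0
  have hkeyE := key E hEm hEsym s0 hs0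
  have hmE : μ (E ∩ {z | sval z = s0}) = 2⁻¹ * μ E := by
    rw [hkeyE, ← mul_assoc, ENNReal.inv_mul_cancel h2ne0 h2net, one_mul]
  have hset : E ∩ ({z | sval z = s0} ∩ B) = (E ∩ B) ∩ {z | sval z = s0} := by
    rw [inter_comm {z | sval z = s0} B, ← inter_assoc]
  rw [cond_apply hEm, cond_apply hEm, cond_apply hEm, hset, hmE, hkeyEB]
  set m := μ (E ∩ B ∩ {z | sval z = s0})
  calc (μ E)⁻¹ * m
      = ((μ E)⁻¹ * μ E) * (((2:ℝ≥0∞)⁻¹ * 2) * ((μ E)⁻¹ * m)) := by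
        rw [ENNReal.inv_mul_cancel hE0 hEt, ENNReal.inv_mul_cancel h2ne0 h2net,
          one_mul, one_mul]
    _ = (μ E)⁻¹ * (2⁻¹ * μ E) * ((μ E)⁻¹ * (2 * m)) := by ring
end
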